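/- Let C ⊆ R^n be a linear code of rank K over a finite chain ring R with residue field of characteristic p. The maximum homogeneous weight of C is at least K·p/(p-1). -/

import Mathlib

open IsLocalRing Submodule

section Auxiliary

variable {R : Type*} [CommRing R]

instance quotFinite' {M : Type*} [AddCommGroup M] [Module R M] [Finite M]
    (N : Submodule R M) : Finite (M ⧸ N) := Quotient.finite _

instance resFinite' [IsLocalRing R] [Finite R] : Finite (ResidueField R) := Quotient.finite _

/-- Cardinality of a module quotient times the submodule. -/
lemma card_quot_mul {M : Type*} [AddCommGroup M] [Module R M] (N : Submodule R M) :
    Nat.card M = Nat.card (M ⧸ N) * Nat.card N :=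
  AddSubgroup.card_eq_card_quotient_mul_card_addSubgroup N.toAddSubgroup

/-- The cardinality of a nonzero cyclic module generated by an element killed by γ equals
the cardinality of the residue field, when (γ) is the maximal ideal. -/
lemma cyclic_card [IsLocalRing R] (γ : R) (hmax : maximalIdeal R = Ideal.span {γ})
    {M : Type*} [AddCommGroup M] [Module R M] (x : M) (hx : x ≠ 0) (hγx : γ • x = 0) :
    Nat.card ↥(Submodule.span R {x}) = Nat.card (ResidueField R) := by
  set f := LinearMap.toSpanSingleton R M x with hf
  have hker : LinearMap.ker f = maximalIdeal R := by
    refine ((maximalIdeal.isMaximal R).eq_of_le ?_ ?_).symm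
    · intro h
      have : f 1 = 0 := by rw [LinearMap.ker_eq_top.mp h]; rfl
      rw [LinearMap.toSpanSingleton_apply_one] at this; exact hx this
    · rw [hmax, Ideal.span_le]
      rintro y rfl
      simpa [f, LinearMap.toSpanSingleton_apply] using hγx
  have e1 : (R ⧸ LinearMap.ker f) ≃ₗ[R] LinearMap.range f := f.quotKerEquivRange
  have e2 : (Submodule.span R {x} : Submodule R M) = LinearMap.range f :=
    (LinearMap.span_singleton_eq_range R M x)
  rw [e2]
  rw [← Nat.card_congr e1.toEquiv, hker]
  rfl

/-- Annihilator of γ in a finite chain ring is the minimal ideal (γ^(s-1)). -/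
lemma ann_gamma [IsLocalRing R] (γ : R) (s : ℕ) (hmax : maximalIdeal R = Ideal.span {γ})
    (hnil' : γ ^ (s-1) ≠ 0) (x : R) (hxγ : x * γ = 0) :
    x ∈ Ideal.span ({γ ^ (s-1)} : Set R) := by
  have key : ∀ d, d ≤ s - 1 → ∀ y : R, y * γ = 0 →
      y ∈ Ideal.span ({γ ^ (s - 1 - d)} : Set R) → y ∈ Ideal.span ({γ ^ (s-1)} : Set R) := by
    intro d
    induction d with
    | zero => intro _ y _ hy; simpa using hy
    | succ d ih =>
      intro hd y hyγ hy
      have hd' : d ≤ s - 1 := Nat.le_of_succ_le hd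
      obtain ⟨a, ha⟩ := Ideal.mem_span_singleton'.mp hy
      by_cases hu : IsUnit a
      · exfalso
        have h1 : a * γ ^ (s - 1 - d) = 0 := by
          have : s - 1 - (d+1) + 1 = s - 1 - d := by omega
          rw [← this, pow_succ, ← mul_assoc, ha, hyγ]
        have h2 : γ ^ (s - 1 - d) = 0 := by
          obtain ⟨u, rfl⟩ := hu
          simpa using congrArg (fun z => (↑u⁻¹ : R) * z) h1
        apply hnil'
        have : s - 1 = (s - 1 - d) + d := by omega
        rw [this, pow_add, h2, zero_mul]
      · have hay : a ∈ maximalIdeal R := hu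
        rw [hmax, Ideal.mem_span_singleton] at hay
        obtain ⟨b, rfl⟩ := hay
        apply ih hd' y hyγ
        apply Ideal.mem_span_singleton'.mpr
        refine ⟨b, ?_⟩
        rw [← ha]
        have : s - 1 - d = s - 1 - (d+1) + 1 := by omega
        rw [this, pow_succ]
        ring
  have h0 : x ∈ Ideal.span ({γ ^ (s - 1 - (s-1))} : Set R) := by simp
  exact key (s-1) le_rfl x hxγ h0

/-- Nakayama for nilpotent γ : if E ⊔ γM = M then E = M. -/
lemma nakayama_nilpotent {M : Type*} [AddCommGroup M] [Module R M] (γ : R) (s : ℕ)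
    (hnil : γ ^ s = 0)
    (E : Submodule R M) (h : E ⊔ LinearMap.range (LinearMap.lsmul R M γ) = ⊤) :
    E = ⊤ := by
  have key : ∀ j, ∀ m : M, m ∈ E ⊔ LinearMap.range (LinearMap.lsmul R M (γ ^ j)) := by
    intro j
    induction j with
    | zero =>
      intro m
      apply Submodule.mem_sup_right
      exact ⟨m, by simp⟩
    | succ j ih =>
      intro m
      obtain ⟨e, he, z, hz, rfl⟩ := Submodule.mem_sup.mp (ih m)
      obtain ⟨m', rfl⟩ := hz
      have hm' : m' ∈ E ⊔ LinearMap.range (LinearMap.lsmul R M γ) := h ▸ Submodule.mem_top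
      obtain ⟨e', he', z', hz', rfl⟩ := Submodule.mem_sup.mp hm'
      obtain ⟨m'', rfl⟩ := hz'
      apply Submodule.mem_sup.mpr
      refine ⟨e + γ ^ j • e', E.add_mem he (E.smul_mem _ he'), γ ^ (j+1) • m'', ⟨m'', rfl⟩, ?_⟩
      simp only [LinearMap.lsmul_apply, smul_add, pow_succ, mul_smul, mul_comm]
      rw [add_assoc]
      congr 1
      rw [smul_comm]
  refine le_antisymm le_top ?_
  intro m _
  have := key s m
  rw [hnil] at this
  simpa using Submodule.mem_sup.mp this |>.elim (fun e ⟨he, z, hz, hzz⟩ => by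
    obtain ⟨m', rfl⟩ := hz
    simp only [LinearMap.lsmul_apply, zero_smul, add_zero] at hzz
    exact hzz ▸ he)

open scoped Classical in
/-- Greedy construction of a small generating set modulo a submodule containing γM. -/
lemma gen_greedy [IsLocalRing R] [Finite R] {M : Type*} [AddCommGroup M] [Module R M]
    [Finite M] (γ : R) (hmax : maximalIdeal R = Ideal.span {γ}) (NN : ℕ) :
    ∀ D : Submodule R M, Nat.card (M ⧸ D) ≤ NN → (∀ m : M, γ • m ∈ D) →
    ∃ T : Finset M, Submodule.span R (T : Set M) ⊔ D = ⊤ ∧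
      Nat.card (ResidueField R) ^ T.card ≤ Nat.card (M ⧸ D) := by
  have hq : 1 < Nat.card (ResidueField R) := Finite.one_lt_card
  induction NN with
  | zero =>
    intro D hD _
    have : 0 < Nat.card (M ⧸ D) := Nat.card_pos
    omega
  | succ NN ih =>
    intro D hD hγD
    by_cases htop : D = ⊤
    · refine ⟨∅, by simp [htop], ?_⟩
      rw [Finset.card_empty, pow_zero]; exact Nat.card_pos
    · obtain ⟨c, hc⟩ : ∃ c : M, c ∉ D := by
        by_contra hcon
        push_neg at hcon
        exact htop (eq_top_iff.mpr fun m _ => hcon m)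
      set cbar : M ⧸ D := D.mkQ c with hcbar
      have hcbar0 : cbar ≠ 0 := by
        simpa [hcbar, Submodule.Quotient.mk_eq_zero] using hc
      have hγcbar : γ • cbar = 0 := by
        have h0 : γ • cbar = D.mkQ (γ • c) := (map_smul D.mkQ γ c).symm
        rw [h0, Submodule.mkQ_apply, Submodule.Quotient.mk_eq_zero]
        exact hγD c
      have hspanc : Nat.card ↥(Submodule.span R {cbar}) = Nat.card (ResidueField R) :=
        cyclic_card γ hmax cbar hcbar0 hγcbar
      set D' : Submodule R M := D ⊔ Submodule.span R {c} with hD'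
      have hle : D ≤ D' := le_sup_left
      have hmap : D'.map D.mkQ = Submodule.span R {cbar} := by
        rw [hD', Submodule.map_sup, Submodule.mkQ_map_self, bot_sup_eq, Submodule.map_span,
          Set.image_singleton]
      have hcard : Nat.card (M ⧸ D) = Nat.card (M ⧸ D') * Nat.card (ResidueField R) := by
        have h1 := card_quot_mul (M := M ⧸ D) (D'.map D.mkQ)
        have h2 : Nat.card ((M ⧸ D) ⧸ (D'.map D.mkQ)) = Nat.card (M ⧸ D') :=
          Nat.card_congr (Submodule.quotientQuotientEquivQuotient D D' hle).toEquiv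
        rw [h1, h2, hmap, hspanc]
      have hlt : Nat.card (M ⧸ D') ≤ NN := by
        have pos : 0 < Nat.card (M ⧸ D') := Nat.card_pos
        nlinarith [hcard, hD, hq]
      obtain ⟨T', hT'span, hT'card⟩ := ih D' hlt (fun m => hle (hγD m))
      refine ⟨insert c T', ?_, ?_⟩
      · apply le_antisymm le_top
        rw [← hT'span, hD']
        refine sup_le ?_ (sup_le ?_ ?_)
        · exact le_trans (Submodule.span_mono (by simp)) le_sup_left
        · exact le_sup_right
        · refine le_trans (Submodule.span_mono ?_) le_sup_left
          simp
      · calc Nat.card (ResidueField R) ^ (insert c T').card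
            ≤ Nat.card (ResidueField R) ^ (T'.card + 1) :=
              Nat.pow_le_pow_right (le_of_lt hq) (Finset.card_insert_le _ _)
          _ = Nat.card (ResidueField R) ^ T'.card * Nat.card (ResidueField R) := pow_succ _ _
          _ ≤ Nat.card (M ⧸ D') * Nat.card (ResidueField R) :=
              Nat.mul_le_mul_right _ hT'card
          _ = Nat.card (M ⧸ D) := hcard.symm

open scoped Classical in
/-- Greedy construction of an "information set" for a submodule of Rⁿ all of whose
coordinates lie in the minimal ideal. -/
lemma socle_greedy [IsLocalRing R] [Finite R] (γ : R) (s : ℕ) (hs : 1 ≤ s)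
    (hmax : maximalIdeal R = Ideal.span {γ}) (hnil : γ ^ s = 0) (hnil' : γ ^ (s-1) ≠ 0)
    (n : ℕ) (NN : ℕ) :
    ∀ W : Submodule R (Fin n → R), Nat.card ↥W ≤ NN →
    (∀ v ∈ W, ∀ i, v i ∈ Ideal.span ({γ ^ (s-1)} : Set R)) →
    ∃ S : Finset (Fin n), Nat.card ↥W = Nat.card (ResidueField R) ^ S.card ∧
      ∀ f : Fin n → R, (∀ j, f j ∈ Ideal.span ({γ ^ (s-1)} : Set R)) →
        ∃ v ∈ W, ∀ j ∈ S, v j = f j := by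
  have hq : 1 < Nat.card (ResidueField R) := Finite.one_lt_card
  set A : Ideal R := Ideal.span ({γ ^ (s-1)} : Set R) with hA
  have hkill : ∀ x : R, x ∈ A → γ • x = 0 := by
    intro x hx
    obtain ⟨a, rfl⟩ := Ideal.mem_span_singleton'.mp hx
    have hss : s - 1 + 1 = s := by omega
    have : γ * (a * γ ^ (s-1)) = a * γ ^ s := by
      conv_rhs => rw [← hss]
      rw [pow_succ]; ring
    rw [smul_eq_mul, this, hnil, mul_zero]
  have hAcard : Nat.card ↥A = Nat.card (ResidueField R) :=
    cyclic_card γ hmax (γ ^ (s-1)) hnil' (hkill _ (Ideal.subset_span rfl))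
  have hAgen : ∀ x : R, x ≠ 0 → x ∈ A → Ideal.span ({x} : Set R) = A := by
    intro x hx hxA
    have hle : Ideal.span ({x} : Set R) ≤ A := by
      rw [Ideal.span_le, Set.singleton_subset_iff]; exact hxA
    have hcard : Nat.card ↥(Ideal.span ({x} : Set R)) = Nat.card ↥A := by
      rw [← Ideal.submodule_span_eq, cyclic_card γ hmax x hx (hkill x hxA), hAcard]
    have : (Ideal.span ({x} : Set R) : Set R) = (A : Set R) := by
      apply Set.eq_of_subset_of_ncard_le hle ?_ (Set.toFinite _)
      rw [← Nat.card_coe_set_eq, ← Nat.card_coe_set_eq]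
      exact le_of_eq hcard.symm
    exact SetLike.ext' this
  induction NN with
  | zero =>
    intro W hW _
    have : 0 < Nat.card ↥W := Nat.card_pos
    omega
  | succ NN ih =>
    intro W hW hcoord
    by_cases hbot : W = ⊥
    · refine ⟨∅, by simp [hbot, Nat.card_unique], ?_⟩
      intro f _
      exact ⟨0, W.zero_mem, by simp⟩
    · obtain ⟨v0, hv0W, hv0⟩ := Submodule.ne_bot_iff W |>.mp hbot
      obtain ⟨i, hi⟩ : ∃ i, v0 i ≠ 0 := by
        by_contra hcon; push_neg at hcon
        exact hv0 (funext hcon)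
      let ev : ↥W →ₗ[R] R := (LinearMap.proj i).comp W.subtype
      have hrange : LinearMap.range ev = A := by
        apply le_antisymm
        · rintro x ⟨y, rfl⟩
          exact hcoord y.1 y.2 i
        · have hx0 : v0 i ∈ LinearMap.range ev := ⟨⟨v0, hv0W⟩, rfl⟩
          rw [← hAgen (v0 i) hi (hcoord v0 hv0W i), Ideal.span_le,
            Set.singleton_subset_iff]
          exact hx0
      set W' : Submodule R (Fin n → R) := W ⊓ LinearMap.ker (LinearMap.proj i) with hW'
      have hW'le : W' ≤ W := inf_le_left
      have ee : ↥(LinearMap.ker ev) ≃ ↥W' :=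
        { toFun := fun x => ⟨x.1.1, ⟨x.1.2, LinearMap.mem_ker.mpr (LinearMap.mem_ker.mp x.2)⟩⟩
          invFun := fun y => ⟨⟨y.1, y.2.1⟩, LinearMap.mem_ker.mpr (LinearMap.mem_ker.mp y.2.2)⟩
          left_inv := fun x => rfl
          right_inv := fun y => rfl }
      have hcardW : Nat.card ↥W = Nat.card (ResidueField R) * Nat.card ↥W' := by
        have h1 := card_quot_mul (M := ↥W) (LinearMap.ker ev)
        have h2 : Nat.card (↥W ⧸ LinearMap.ker ev) = Nat.card ↥(LinearMap.range ev) :=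
          Nat.card_congr ev.quotKerEquivRange.toEquiv
        rw [h1, h2, hrange, hAcard, Nat.card_congr ee]
      have hlt : Nat.card ↥W' ≤ NN := by
        haveI : Nonempty ↥W' := ⟨⟨0, W'.zero_mem⟩⟩
        have pos : 0 < Nat.card ↥W' := Nat.card_pos
        nlinarith [hcardW, hW, hq]
      obtain ⟨S', hS'card, hS'surj⟩ := ih W' hlt (fun v hv j => hcoord v (hW'le hv) j)
      have hiS' : i ∉ S' := by
        intro hiS
        obtain ⟨v, hvW', hvj⟩ := hS'surj (fun _ => γ ^ (s-1)) (fun _ => Ideal.subset_span rfl)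
        have : v i = 0 := by
          have := hvW'.2
          simpa [LinearMap.mem_ker] using this
        rw [hvj i hiS] at this
        exact hnil' this
      refine ⟨insert i S', ?_, ?_⟩
      · rw [Finset.card_insert_of_notMem hiS', pow_succ, hcardW, hS'card, mul_comm]
      · intro f hf
        obtain ⟨u, hu⟩ : ∃ u : ↥W, ev u = f i := by
          have : f i ∈ LinearMap.range ev := hrange ▸ hf i
          obtain ⟨u, hu⟩ := this
          exact ⟨u, hu⟩
        obtain ⟨v', hv'W', hv'⟩ := hS'surj (fun j => f j - u.1 j)
          (fun j => A.sub_mem (hf j) (hcoord u.1 u.2 j))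
        refine ⟨u.1 + v', W.add_mem u.2 (hW'le hv'W'), ?_⟩
        intro j hj
        rcases Finset.mem_insert.mp hj with rfl | hjS'
        · have hv'i : v' j = 0 := by
            have := hv'W'.2
            simpa [LinearMap.mem_ker] using this
          have hui : u.1 j = f j := hu
          simp [Pi.add_apply, hv'i, hui]
        · have := hv' j hjS'
          simp [Pi.add_apply, this]

end Auxiliary

open Classical in
/-- Normalized homogeneous weight on a chain ring with maximal ideal ⟨γ⟩ of
nilpotency index s and residue characteristic p. -/
noncomputable def homWt (R : Type*) [CommRing R] (γ : R) (s p : ℕ) (x : R) : ℚ :=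
  if x = 0 then 0
  else if x ∈ Ideal.span ({γ ^ (s - 1)} : Set R) then (p : ℚ) / (p - 1)
  else 1

/-- a linear code C ⊆ Rⁿ of rank K over a finite chain ring R
(residue field of characteristic p) has maximum homogeneous weight at least
K·p/(p−1). -/
theorem homogeneous_anticode_bound (R : Type*) [CommRing R] [Fintype R]
    [IsLocalRing R] (γ : R) (s : ℕ) (hs : 1 ≤ s)
    (hmax : IsLocalRing.maximalIdeal R = Ideal.span {γ})
    (hnil : γ ^ s = 0) (hnil' : γ ^ (s - 1) ≠ 0)
    (p r : ℕ) (hp : p.Prime)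
    (hres : Nat.card (IsLocalRing.ResidueField R) = p ^ r)
    (n : ℕ) (C : Submodule R (Fin n → R)) (K : ℕ)
    (hKgen : ∃ T : Finset (Fin n → R), T.card = K ∧
      Submodule.span R (T : Set (Fin n → R)) = C)
    (hKmin : ∀ T : Finset (Fin n → R),
      Submodule.span R (T : Set (Fin n → R)) = C → K ≤ T.card)
    (w : ℚ)
    (hw : IsGreatest {m : ℚ | ∃ c ∈ C, m = ∑ i, homWt R γ s p (c i)} w) :
    (K : ℚ) * p / (p - 1) ≤ w := by
  classical
  have hq : 1 < Nat.card (ResidueField R) := Finite.one_lt_card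
  set q : ℕ := Nat.card (ResidueField R) with hqdef
  -- the multiplication-by-γ endomorphism of C
  set ψ : ↥C →ₗ[R] ↥C := LinearMap.lsmul R ↥C γ with hψ
  set D : Submodule R ↥C := LinearMap.range ψ with hD
  have hγD : ∀ m : ↥C, γ • m ∈ D := fun m => ⟨m, rfl⟩
  -- a small generating set
  obtain ⟨T, hTspan, hTcard⟩ := gen_greedy γ hmax (Nat.card (↥C ⧸ D)) D le_rfl hγD
  have hTgen : Submodule.span R (T : Set ↥C) = ⊤ :=
    nakayama_nilpotent γ s hnil _ hTspan
  -- push T to the ambient space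
  have hKT : K ≤ T.card := by
    set T₀ : Finset (Fin n → R) := T.image (⇑C.subtype) with hT₀
    have hcard₀ : T₀.card = T.card :=
      Finset.card_image_of_injective T (Submodule.injective_subtype C)
    have hspan₀ : Submodule.span R (T₀ : Set (Fin n → R)) = C := by
      rw [hT₀, Finset.coe_image, ← Submodule.map_span, hTgen, Submodule.map_top,
        Submodule.range_subtype]
    have := hKmin T₀ hspan₀
    omega
  -- the socle W
  set W : Submodule R (Fin n → R) :=
    C ⊓ LinearMap.ker (LinearMap.lsmul R (Fin n → R) γ) with hW
  have eW : ↥(LinearMap.ker ψ) ≃ ↥W :=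
    { toFun := fun x => ⟨x.1.1, ⟨x.1.2, by
        have hx : ψ x.1 = 0 := LinearMap.mem_ker.mp x.2
        have hx' : γ • (x.1 : Fin n → R) = 0 := congrArg Subtype.val hx
        exact LinearMap.mem_ker.mpr hx'⟩⟩
      invFun := fun y => ⟨⟨y.1, y.2.1⟩, by
        have hy : γ • (y.1 : Fin n → R) = 0 := LinearMap.mem_ker.mp y.2.2
        exact LinearMap.mem_ker.mpr (Subtype.ext hy)⟩
      left_inv := fun x => rfl
      right_inv := fun y => rfl }
  -- card (C ⧸ D) = card W
  have hcardW : Nat.card (↥C ⧸ D) = Nat.card ↥W := by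
    have h1 := card_quot_mul (M := ↥C) D
    have h2 := card_quot_mul (M := ↥C) (LinearMap.ker ψ)
    have h3 : Nat.card (↥C ⧸ LinearMap.ker ψ) = Nat.card ↥D :=
      Nat.card_congr ψ.quotKerEquivRange.toEquiv
    haveI : Nonempty ↥D := ⟨0⟩
    have hDpos : 0 < Nat.card ↥D := Nat.card_pos
    have : Nat.card (↥C ⧸ D) * Nat.card ↥D = Nat.card ↥D * Nat.card ↥(LinearMap.ker ψ) := by
      rw [← h1, h2, h3]
    have h4 : Nat.card (↥C ⧸ D) = Nat.card ↥(LinearMap.ker ψ) := by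
      apply Nat.eq_of_mul_eq_mul_left hDpos
      rw [mul_comm (Nat.card ↥D) (Nat.card (↥C ⧸ D))]
      exact this
    rw [h4, Nat.card_congr eW]
  -- coordinates of W lie in the minimal ideal
  have hcoordW : ∀ v ∈ W, ∀ i, v i ∈ Ideal.span ({γ ^ (s-1)} : Set R) := by
    intro v hv i
    have hγv : γ • v = 0 := by
      simpa [LinearMap.mem_ker] using hv.2
    have : v i * γ = 0 := by
      have := congrFun hγv i
      simpa [Pi.smul_apply, smul_eq_mul, mul_comm] using this
    exact ann_gamma γ s hmax hnil' (v i) this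
  -- greedy information set for W
  obtain ⟨S, hScard, hSsurj⟩ := socle_greedy γ s hs hmax hnil hnil' n
    (Nat.card ↥W) W le_rfl hcoordW
  -- K ≤ |S|
  have hKS : K ≤ S.card := by
    have hchain : q ^ K ≤ q ^ S.card := by
      calc q ^ K ≤ q ^ T.card := Nat.pow_le_pow_right (le_of_lt hq) hKT
        _ ≤ Nat.card (↥C ⧸ D) := hTcard
        _ = Nat.card ↥W := hcardW
        _ = q ^ S.card := hScard
    exact (Nat.pow_le_pow_iff_right hq).mp hchain
  -- the codeword of large weight
  obtain ⟨v, hvW, hvS⟩ := hSsurj (fun _ => γ ^ (s-1)) (fun _ => Ideal.subset_span rfl)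
  have hvC : v ∈ C := hvW.1
  -- weight computations
  have hp2 : (2 : ℚ) ≤ (p : ℚ) := by exact_mod_cast hp.two_le
  have hpden : (0 : ℚ) < (p : ℚ) - 1 := by linarith
  have hwt_nonneg : ∀ x : R, 0 ≤ homWt R γ s p x := by
    intro x
    unfold homWt
    split_ifs
    · exact le_refl 0
    · exact div_nonneg (by linarith) (by linarith)
    · norm_num
  have hwtS : ∀ j ∈ S, homWt R γ s p (v j) = (p : ℚ) / ((p : ℚ) - 1) := by
    intro j hj
    rw [hvS j hj]
    unfold homWt
    rw [if_neg hnil']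
    have hmem : γ ^ (s-1) ∈ Ideal.span ({γ ^ (s - 1)} : Set R) :=
      Ideal.mem_span_singleton_self _
    rw [if_pos hmem]
  have hsum : (S.card : ℚ) * ((p : ℚ) / ((p : ℚ) - 1)) ≤ ∑ i, homWt R γ s p (v i) := by
    have h1 : ∑ j ∈ S, homWt R γ s p (v j) = (S.card : ℚ) * ((p : ℚ) / ((p : ℚ) - 1)) := by
      rw [Finset.sum_congr rfl hwtS, Finset.sum_const, nsmul_eq_mul]
    rw [← h1]
    apply Finset.sum_le_sum_of_subset_of_nonneg (Finset.subset_univ S)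
    intro i _ _
    exact hwt_nonneg (v i)
  have hwge : ∑ i, homWt R γ s p (v i) ≤ w := hw.2 ⟨v, hvC, rfl⟩
  have hKS' : (K : ℚ) ≤ (S.card : ℚ) := by exact_mod_cast hKS
  have hfrac : (0 : ℚ) ≤ (p : ℚ) / ((p : ℚ) - 1) := by positivity
  calc (K : ℚ) * p / (p - 1) = (K : ℚ) * ((p : ℚ) / ((p : ℚ) - 1)) := by ring
    _ ≤ (S.card : ℚ) * ((p : ℚ) / ((p : ℚ) - 1)) := by
        exact mul_le_mul_of_nonneg_right hKS' hfrac
    _ ≤ ∑ i, homWt R γ s p (v i) := hsum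
    _ ≤ w := hwge
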